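/- Let $X \subseteq \mathcal{A}^{\mathbb{Z}}$ be a strongly irreducible subshift over a finite alphabet $\mathcal{A}$. Then there exists $N_0 \in \mathbb{N}$ such that for every $N \geq N_0$, $X$ contains a point of period $N$, i.e., an element $x \in X$ with $x_i = x_{i+N}$ for all $i \in \mathbb{Z}$. -/

import Mathlib

namespace SIaux

variable {A : Type*} {X : Set (ℤ → A)}

/-- The word `w` is globally allowed in `X` (appears at positions `[0, w.length)` of a point). -/
def InL (X : Set (ℤ → A)) (w : List A) : Prop :=
  ∃ x ∈ X, ∀ (i : ℕ) (h : i < w.length), x (i : ℤ) = w[i]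

lemma inL_left {u v : List A} (h : InL X (u ++ v)) : InL X u := by
  obtain ⟨x, hx, hw⟩ := h
  refine ⟨x, hx, fun i hi => ?_⟩
  have := hw i (by simp; omega)
  rwa [List.getElem_append_left hi] at this

lemma inL_right (hshift : ∀ x ∈ X, ∀ n : ℤ, (fun i => x (i + n)) ∈ X)
    {u v : List A} (h : InL X (u ++ v)) : InL X v := by
  obtain ⟨x, hx, hw⟩ := h
  refine ⟨fun i => x (i + u.length), hshift x hx u.length, fun i hi => ?_⟩
  have h2 : u.length + i < (u ++ v).length := by simp; omega
  have := hw (u.length + i) h2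
  rw [List.getElem_append_right (by omega)] at this
  simp only [Nat.add_sub_cancel_left] at this
  show x ((i : ℤ) + u.length) = v[i]
  rw [show ((i : ℤ) + u.length) = ((u.length + i : ℕ) : ℤ) by push_cast; ring]
  exact this

lemma glue (hshift : ∀ x ∈ X, ∀ n : ℤ, (fun i => x (i + n)) ∈ X) {k : ℕ}
    (hSI : ∀ F F' : Set ℤ, (∀ i ∈ F, ∀ j ∈ F', (k : ℤ) < |i - j|) →
      ∀ x ∈ X, ∀ y ∈ X, ∃ z ∈ X, (∀ i ∈ F, z i = x i) ∧ (∀ j ∈ F', z j = y j))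
    {a b : List A} (ha : InL X a) (hb : InL X b) {d : ℕ} (hd : k ≤ d) :
    ∃ g : List A, g.length = d ∧ InL X (a ++ g ++ b) := by
  obtain ⟨x, hx, hxa⟩ := ha
  obtain ⟨y0, hy0, hyb⟩ := hb
  set m := a.length with hm
  set y : ℤ → A := fun i => y0 (i + (-(m + d : ℤ))) with hy
  have hyX : y ∈ X := hshift y0 hy0 _
  set F : Set ℤ := {i | 0 ≤ i ∧ i < (m : ℤ)} with hF
  set F' : Set ℤ := {j | ((m : ℤ) + d) ≤ j ∧ j < (m : ℤ) + d + b.length} with hF'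
  have hdist : ∀ i ∈ F, ∀ j ∈ F', (k : ℤ) < |i - j| := by
    rintro i ⟨hi0, him⟩ j ⟨hj0, _⟩
    rw [abs_sub_comm, abs_of_nonneg (by omega)]
    omega
  obtain ⟨z, hz, hzx, hzy⟩ := hSI F F' hdist x hx y hyX
  refine ⟨List.ofFn (fun i : Fin d => z ((m : ℤ) + i)), by simp, z, hz, ?_⟩
  intro i hi
  have hlen : ((a ++ List.ofFn fun i : Fin d => z ((m : ℤ) + i)) ++ b).length
      = m + d + b.length := by simp; omega
  rw [hlen] at hi
  rcases lt_or_ge i m with h1 | h1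
  · rw [List.getElem_append_left (by simp; omega), List.getElem_append_left h1]
    rw [← hxa i h1]
    exact hzx i ⟨by exact_mod_cast Nat.zero_le i, by exact_mod_cast h1⟩
  · rcases lt_or_ge i (m + d) with h2 | h2
    · rw [List.getElem_append_left (by simp; omega), List.getElem_append_right h1,
        List.getElem_ofFn]
      show z (i : ℤ) = z ((m : ℤ) + ((i - a.length : ℕ) : ℤ))
      congr 1
      omega
    · have hlen2 : (a ++ List.ofFn fun i : Fin d => z ((m : ℤ) + i)).length = m + d := by
        simp [hm]
      rw [List.getElem_append_right (by simp; omega)]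
      simp only [hlen2]
      have hj : (i : ℤ) ∈ F' := ⟨by push_cast; omega, by push_cast; omega⟩
      rw [hzy i hj]
      show y0 ((i : ℤ) + -((m : ℤ) + (d : ℤ))) = b[i - (m + d)]'(by omega)
      rw [show ((i : ℤ) + -((m : ℤ) + (d : ℤ))) = ((i - (m + d) : ℕ) : ℤ) by push_cast; omega]
      exact hyb _ (by omega)


lemma getElem_congr' {l : List A} {a b : ℕ} (h : a = b) (ha : a < l.length)
    (hb : b < l.length) : l[a]'ha = l[b]'hb := by subst h; rfl

end SIaux
open SIaux Filter in
/-- Let `X ⊆ 𝒜^ℤ` be a (nonempty) strongly irreducible subshift over a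
finite alphabet `𝒜` (with strong irreducibility constant `k`). Then there is `N₀` such that
for every `N ≥ N₀`, `X` contains a point of period `N`. -/
theorem SI_subshift_has_periodic_points {A : Type*} [Fintype A]
    [TopologicalSpace A] [DiscreteTopology A]
    (X : Set (ℤ → A)) (hne : X.Nonempty) (hclosed : IsClosed X)
    (hshift : ∀ x ∈ X, ∀ n : ℤ, (fun i => x (i + n)) ∈ X)
    (k : ℕ)
    (hSI : ∀ F F' : Set ℤ, (∀ i ∈ F, ∀ j ∈ F', (k : ℤ) < |i - j|) →
      ∀ x ∈ X, ∀ y ∈ X, ∃ z ∈ X, (∀ i ∈ F, z i = x i) ∧ (∀ j ∈ F', z j = y j)) :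
    ∃ N₀ : ℕ, ∀ N : ℕ, N₀ ≤ N → ∃ x ∈ X, ∀ i : ℤ, x (i + N) = x i := by
  classical
  -- gap-word sets
  set G : List A → List A → Set (List A) :=
    fun a b => {g | g.length = k ∧ InL X (a ++ g ++ b)} with hG
  have Gfin : ∀ a b, (G a b).Finite := by
    intro a b
    exact (List.finite_length_eq A k).subset (fun g hg => hg.1)
  have hnil : InL X ([] : List A) := ⟨hne.choose, hne.choose_spec, by simp⟩
  -- minimize the number of gap words
  set S : Set ℕ := {n | ∃ a b, InL X a ∧ InL X b ∧ (G a b).ncard = n} with hS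
  have hSne : S.Nonempty := ⟨_, [], [], hnil, hnil, rfl⟩
  obtain ⟨p, q, hp, hq, hM⟩ := Nat.sInf_mem hSne
  -- minimality gives stability of gap sets under valid extensions
  have key : ∀ u v, InL X (u ++ p) → InL X (q ++ v) → G (u ++ p) (q ++ v) = G p q := by
    intro u v hup hqv
    refine Set.eq_of_subset_of_ncard_le ?_ ?_ (Gfin p q)
    · rintro g ⟨hlen, hg⟩
      refine ⟨hlen, ?_⟩
      have h1 : (u ++ p) ++ g ++ (q ++ v) = u ++ ((p ++ g ++ q) ++ v) := by
        simp [List.append_assoc]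
      rw [h1] at hg
      exact inL_left (inL_right hshift hg)
    · rw [hM]
      exact Nat.sInf_le ⟨u ++ p, q ++ v, hup, hqv, rfl⟩
  -- the synchronizing word
  obtain ⟨c, hclen, hc⟩ := glue hshift hSI hp hq (le_refl k)
  set w : List A := p ++ c ++ q with hwdef
  have hcG : c ∈ G p q := ⟨hclen, hc⟩
  have hw : InL X w := hc
  have sync : ∀ u v, InL X (u ++ w) → InL X (w ++ v) → InL X (u ++ (w ++ v)) := by
    intro u v hu hv
    have hup : InL X (u ++ p) := by
      have h1 : u ++ w = (u ++ p) ++ (c ++ q) := by simp [hwdef, List.append_assoc]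
      exact inL_left (h1 ▸ hu)
    have hqv : InL X (q ++ v) := by
      have h1 : w ++ v = (p ++ c) ++ (q ++ v) := by simp [hwdef, List.append_assoc]
      exact inL_right hshift (h1 ▸ hv)
    have hcmem : c ∈ G (u ++ p) (q ++ v) := (key u v hup hqv).symm ▸ hcG
    have h2 : (u ++ p) ++ c ++ (q ++ v) = u ++ (w ++ v) := by
      simp [hwdef, List.append_assoc]
    exact h2 ▸ hcmem.2
  -- periodic points of all periods N ≥ w.length + k + 1
  refine ⟨w.length + k + 1, fun N hN => ?_⟩
  obtain ⟨g, hglen, hwgw⟩ := glue hshift hSI hw hw (d := N - w.length) (by omega)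
  set s : List A := w ++ g with hsdef
  have hsN : s.length = N := by simp [hsdef, hglen]; omega
  have hN0 : 0 < N := by omega
  -- repetitions (s^t) ++ w are all allowed
  set reps : ℕ → List A := fun t => Nat.rec w (fun _ r => s ++ r) t with hreps
  have hreps_succ : ∀ t, reps (t + 1) = s ++ reps t := fun t => rfl
  have hreps_pre : ∀ t, ∃ v, reps t = w ++ v := by
    intro t
    induction t with
    | zero => exact ⟨[], by simp [hreps]⟩
    | succ t ih =>
      obtain ⟨v, hv⟩ := ih
      exact ⟨g ++ reps t, by rw [hreps_succ, hsdef, List.append_assoc]⟩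
  have hreps_in : ∀ t, InL X (reps t) := by
    intro t
    induction t with
    | zero => exact hw
    | succ t ih =>
      obtain ⟨v, hv⟩ := hreps_pre t
      have h1 : InL X ((w ++ g) ++ w) := hwgw
      have := sync (w ++ g) v h1 (hv ▸ ih)
      rw [hreps_succ, hsdef, hv]
      simpa [List.append_assoc] using this
  have hreps_len : ∀ t, (reps t).length = t * N + w.length := by
    intro t
    induction t with
    | zero => show w.length = 0 * N + w.length; omega
    | succ t ih => rw [hreps_succ]; simp [ih, hsN]; ring
  -- each entry of reps t is periodic
  have hmodlt : ∀ j : ℕ, j % N < s.length := by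
    intro j; rw [hsN]; exact Nat.mod_lt _ hN0
  have hreps_get : ∀ t j (hj : j < (reps t).length), (reps t)[j] = s[j % N]'(hmodlt j) := by
    intro t
    induction t with
    | zero =>
      intro j hj
      have hjw : j < w.length := hj
      have hjN : j < N := by omega
      calc (reps 0)[j]'hj = (w ++ g)[j]'(by simp; omega) :=
            (List.getElem_append_left hjw).symm
        _ = s[j % N]'(hmodlt j) := getElem_congr' (Nat.mod_eq_of_lt hjN).symm _ _
    | succ t ih =>
      intro j hj
      have hj' : j < (s ++ reps t).length := hj
      have hj2 : j < s.length + (reps t).length := by simpa using hj'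
      show (s ++ reps t)[j]'hj' = s[j % N]'(hmodlt j)
      rcases lt_or_ge j N with h1 | h1
      · rw [List.getElem_append_left (show j < s.length by omega)]
        exact getElem_congr' (Nat.mod_eq_of_lt h1).symm _ _
      · rw [List.getElem_append_right (show s.length ≤ j by omega)]
        refine (ih (j - s.length) (by omega)).trans (getElem_congr' ?_ _ _)
        rw [hsN]
        conv_rhs => rw [show j = (j - N) + N by omega]
        rw [Nat.add_mod_right]
  -- the periodic configuration
  have hNZ : (0 : ℤ) < (N : ℤ) := by exact_mod_cast hN0
  have hmodlt' : ∀ i : ℤ, (i % (N : ℤ)).toNat < s.length := by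
    intro i
    have h1 := Int.emod_lt_of_pos i hNZ
    have h2 := Int.emod_nonneg i hNZ.ne'
    rw [hsN]
    omega
  set P : ℤ → A := fun i => s[(i % (N : ℤ)).toNat]'(hmodlt' i) with hP
  have hper : ∀ i : ℤ, P (i + N) = P i := by
    intro i
    refine getElem_congr' ?_ _ _
    have h1 : (i + (N : ℤ)) % N = i % N := by
      rw [show (i + (N : ℤ)) = i + (N : ℤ) * 1 by ring, Int.add_mul_emod_self_left]
    rw [h1]
  -- approximating points
  have approx : ∀ t : ℕ, ∃ y ∈ X, ∀ i : ℤ,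
      -((t * N : ℕ) : ℤ) ≤ i → i < ((t * N : ℕ) : ℤ) → y i = P i := by
    intro t
    obtain ⟨M, hMdef⟩ : ∃ M : ℕ, M = t * N := ⟨_, rfl⟩
    obtain ⟨x, hx, hxw⟩ := hreps_in (2 * t)
    refine ⟨fun i => x (i + (M : ℤ)), hshift x hx _, fun i hi1 hi2 => ?_⟩
    rw [← hMdef] at hi1 hi2
    have hlen : (reps (2 * t)).length = M + M + w.length := by
      rw [hreps_len (2 * t), hMdef]; ring
    have hiM : (0 : ℤ) ≤ i + (M : ℤ) := by omega
    have hb : (i + (M : ℤ)).toNat < (reps (2 * t)).length := by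
      rw [hlen]; omega
    have h1 := hxw (i + (M : ℤ)).toNat hb
    rw [show (((i + (M : ℤ)).toNat : ℕ) : ℤ) = i + (M : ℤ) by omega] at h1
    show x (i + (M : ℤ)) = P i
    rw [h1, hreps_get (2 * t) _ hb]
    refine getElem_congr' ?_ _ _
    have h2 := Int.emod_nonneg i hNZ.ne'
    refine Int.natCast_inj.mp ?_
    push_cast
    rw [Int.toNat_of_nonneg hiM, Int.toNat_of_nonneg h2,
      show (i + (M : ℤ)) = i + (N : ℤ) * t by push_cast [hMdef]; ring,
      Int.add_mul_emod_self_left]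
  choose y hyX hyP using approx
  have htend : Tendsto y atTop (nhds P) := by
    rw [tendsto_pi_nhds]
    intro i
    have hev : ∀ᶠ t in atTop, y t i = P i := by
      filter_upwards [eventually_ge_atTop (i.natAbs + 1)] with t ht
      have h3 : i.natAbs + 1 ≤ t * N := le_trans ht (Nat.le_mul_of_pos_right t hN0)
      exact hyP t i (by push_cast at h3 ⊢; omega) (by push_cast at h3 ⊢; omega)
    exact tendsto_const_nhds.congr' (by filter_upwards [hev] with t ht using ht.symm)
  have hPX : P ∈ X := hclosed.mem_of_tendsto htend (Eventually.of_forall hyX)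
  exact ⟨P, hPX, hper⟩
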